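/- Let 𝐧 ∈ ℕ^q with an 𝐧-coloring c, and let G_𝐧 = H_{|𝐧|} ⋊_φ S_𝐧 act on S_{|𝐧|} by (h,σ).π = h(σπσ^{−1}). Then for all π, π′ ∈ S_{|𝐧|}, Π(π) = Π(π′) if and only if π and π′ lie in the same G_𝐧-orbit; consequently the map Π induces a bijection between the orbit space S_{|𝐧|}/G_𝐧 and the set 𝒜_𝐧 of q-colored partitions of 𝐧. -/

import Mathlib

open Finset
open scoped Classical

/-- `col(A) = ∑_𝐚 A(𝐚) • 𝐚`, the color count vector of a colored partition. -/
def colA {q : ℕ} (A : (Fin q → ℕ) →₀ ℕ) : Fin q → ℕ :=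
  fun j => ∑ a ∈ A.support, A a * a j

/-- The set of `q`-colored partitions of `𝐧`. -/
def CPartSet {q : ℕ} (n : Fin q → ℕ) : Set ((Fin q → ℕ) →₀ ℕ) :=
  {A | A 0 = 0 ∧ colA A = n}

/-- `ε(κ) ∈ ℕ^q`: the color count of a set of elements under the coloring `c`. -/
def epsilonCount {N q : ℕ} (c : Fin N → Fin q) (s : Finset (Fin N)) : Fin q → ℕ :=
  fun j => (s.filter fun y => c y = j).card

/-- `Π(π)`: the `q`-colored partition of a permutation `π`, recording for each color count
`𝐚` the number of cycles of `π` (including fixed points) with color count `𝐚`. -/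
noncomputable def Ppi {N q : ℕ} (c : Fin N → Fin q) (π : Equiv.Perm (Fin N)) :
    (Fin q → ℕ) →₀ ℕ :=
  (∑ κ ∈ π.cycleFactorsFinset, Finsupp.single (epsilonCount c κ.support) 1) +
    ∑ y ∈ Finset.univ \ π.support, Finsupp.single (epsilonCount c {y}) 1

/-- `H_n`: bijections `h` of `S_n` preserving conjugacy classes with
`i ~_π j → i ~_{h(π)} j`. -/
def Hset (n : ℕ) : Set (Equiv.Perm (Equiv.Perm (Fin n))) :=
  {h | (∀ π, IsConj π (h π)) ∧
    ∀ (π : Equiv.Perm (Fin n)) (i j : Fin n), π.SameCycle i j → (h π).SameCycle i j}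

lemma glue {α β γ : Type*} (hj : Nonempty (α → β)) (s : Finset α) (t : Finset β)
    (u : α → γ) (v : β → γ)
    (h : ∀ b, (s.filter fun x => u x = b).card = (t.filter fun y => v y = b).card) :
    ∃ f : α → β, Set.BijOn f ↑s ↑t ∧ ∀ x ∈ s, v (f x) = u x := by
  classical
  induction s using Finset.strongInduction generalizing t with
  | _ s ih =>
  rcases s.eq_empty_or_nonempty with rfl | ⟨x, hx⟩
  · have ht : t = ∅ := by
      by_contra hne
      obtain ⟨y, hy⟩ := Finset.nonempty_of_ne_empty hne
      have h2 := h (v y)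
      rw [Finset.filter_empty, Finset.card_empty] at h2
      have hpos : 0 < (t.filter fun z => v z = v y).card :=
        Finset.card_pos.2 ⟨y, Finset.mem_filter.2 ⟨hy, rfl⟩⟩
      omega
    subst ht
    exact ⟨Classical.choice hj, by simp [Set.BijOn, Set.MapsTo, Set.InjOn, Set.SurjOn], by simp⟩
  · have hpos : 0 < (t.filter fun z => v z = u x).card := by
      rw [← h (u x)]
      exact Finset.card_pos.2 ⟨x, Finset.mem_filter.2 ⟨hx, rfl⟩⟩
    obtain ⟨y, hy⟩ := Finset.card_pos.1 hpos
    rw [Finset.mem_filter] at hy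
    obtain ⟨hyt, hyv⟩ := hy
    have h' : ∀ b, ((s.erase x).filter fun z => u z = b).card
        = ((t.erase y).filter fun z => v z = b).card := by
      intro b
      rw [Finset.filter_erase, Finset.filter_erase]
      by_cases hb : u x = b
      · rw [Finset.card_erase_of_mem (Finset.mem_filter.2 ⟨hx, hb⟩),
          Finset.card_erase_of_mem (Finset.mem_filter.2 ⟨hyt, hyv.trans hb⟩), h b]
      · rw [Finset.erase_eq_of_notMem (by simp [hb]),
          Finset.erase_eq_of_notMem (by simp [hyv, hb]), h b]
    obtain ⟨f', hf', hval'⟩ := ih (s.erase x) (Finset.erase_ssubset hx) (t.erase y) h'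
    refine ⟨fun z => if z = x then y else f' z, ⟨?_, ?_, ?_⟩, ?_⟩
    · intro z hz
      simp only [Finset.coe_insert, Set.mem_insert_iff, Finset.mem_coe] at hz ⊢
      by_cases hzx : z = x
      · simpa [hzx] using hyt
      · simp only [if_neg hzx]
        exact Finset.mem_of_mem_erase (hf'.1 (by simp [Finset.mem_erase, hzx, hz]))
    · intro z hz w hw hzw
      simp only [Finset.mem_coe] at hz hw
      by_cases hzx : z = x <;> by_cases hwx : w = x
      · rw [hzx, hwx]
      · exfalso
        simp only [if_pos hzx, if_neg hwx] at hzw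
        have : f' w ∈ t.erase y := hf'.1 (by simp [Finset.mem_erase, hwx, hw])
        rw [← hzw] at this
        exact (Finset.mem_erase.1 this).1 rfl
      · exfalso
        simp only [if_neg hzx, if_pos hwx] at hzw
        have : f' z ∈ t.erase y := hf'.1 (by simp [Finset.mem_erase, hzx, hz])
        rw [hzw] at this
        exact (Finset.mem_erase.1 this).1 rfl
      · simp only [if_neg hzx, if_neg hwx] at hzw
        exact hf'.2.1 (by simp [Finset.mem_erase, hzx, hz]) (by simp [Finset.mem_erase, hwx, hw]) hzw
    · intro w hw
      simp only [Finset.mem_coe] at hw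
      by_cases hwy : w = y
      · exact ⟨x, by simpa using hx, by simp [hwy]⟩
      · obtain ⟨z, hz, hzw⟩ := hf'.2.2 (Finset.mem_coe.2 (Finset.mem_erase.2 ⟨hwy, hw⟩))
        rw [Finset.mem_coe, Finset.mem_erase] at hz
        exact ⟨z, Finset.mem_coe.2 hz.2, by simp [if_neg hz.1, hzw]⟩
    · intro z hz
      by_cases hzx : z = x
      · simp [hzx, hyv]
      · simp only [if_neg hzx]
        exact hval' z (Finset.mem_erase.2 ⟨hzx, hz⟩)

namespace PpiProof


variable {N q : ℕ}

noncomputable def cls (π : Equiv.Perm (Fin N)) (i : Fin N) : Finset (Fin N) :=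
  univ.filter (fun j => π.SameCycle i j)

lemma mem_cls {π : Equiv.Perm (Fin N)} {i j : Fin N} : j ∈ cls π i ↔ π.SameCycle i j := by
  simp [cls]

lemma self_mem_cls {π : Equiv.Perm (Fin N)} {i : Fin N} : i ∈ cls π i :=
  mem_cls.2 (Equiv.Perm.SameCycle.refl _ _)

lemma cls_eq_cls {π : Equiv.Perm (Fin N)} {i j : Fin N} :
    cls π i = cls π j ↔ π.SameCycle i j := by
  constructor
  · intro h
    have : j ∈ cls π i := h ▸ self_mem_cls
    exact mem_cls.1 this
  · intro h
    ext k
    simp only [mem_cls]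
    exact ⟨fun hk => (h.symm).trans hk, fun hk => h.trans hk⟩

lemma cls_fixed {π : Equiv.Perm (Fin N)} {i : Fin N} (h : π i = i) : cls π i = {i} := by
  ext k
  simp only [mem_cls, Finset.mem_singleton]
  constructor
  · rintro ⟨m, hm⟩
    rw [Equiv.Perm.zpow_apply_eq_self_of_apply_eq_self h] at hm
    exact hm.symm
  · rintro rfl
    exact Equiv.Perm.SameCycle.refl _ _

lemma cls_of_mem_support {π : Equiv.Perm (Fin N)} {i : Fin N} (h : i ∈ π.support) :
    cls π i = (π.cycleOf i).support := by
  ext k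
  rw [mem_cls, Equiv.Perm.mem_support_cycleOf_iff]
  exact ⟨fun hk => ⟨hk, h⟩, fun hk => hk.1⟩

lemma two_le_card_cls {π : Equiv.Perm (Fin N)} {i : Fin N} (h : i ∈ π.support) :
    2 ≤ (cls π i).card := by
  rw [cls_of_mem_support h]
  exact Equiv.Perm.IsCycle.two_le_card_support (Equiv.Perm.isCycle_cycleOf _ (Equiv.Perm.mem_support.1 h))

noncomputable def Blocks (π : Equiv.Perm (Fin N)) : Finset (Finset (Fin N)) :=
  univ.image (cls π)

lemma blocks_eq (π : Equiv.Perm (Fin N)) :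
    Blocks π = (π.cycleFactorsFinset.image Equiv.Perm.support) ∪
      ((univ \ π.support).image (fun y => ({y} : Finset (Fin N)))) := by
  ext B
  simp only [Blocks, Finset.mem_image, Finset.mem_union, Finset.mem_univ, true_and,
    Finset.mem_sdiff, Equiv.Perm.mem_support, not_not]
  constructor
  · rintro ⟨i, rfl⟩
    by_cases hi : i ∈ π.support
    · left
      exact ⟨π.cycleOf i, Equiv.Perm.cycleOf_mem_cycleFactorsFinset_iff.2 hi,
        (cls_of_mem_support hi).symm⟩
    · right
      exact ⟨i, Equiv.Perm.notMem_support.1 hi,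
        (cls_fixed (Equiv.Perm.notMem_support.1 hi)).symm⟩
  · rintro (⟨κ, hκ, rfl⟩ | ⟨y, hy, rfl⟩)
    · obtain ⟨a, ha⟩ := (Equiv.Perm.mem_cycleFactorsFinset_iff.1 hκ).1.nonempty_support
      have haπ : a ∈ π.support := by
        have h2 := (Equiv.Perm.mem_cycleFactorsFinset_iff.1 hκ).2 a ha
        rw [Equiv.Perm.mem_support] at ha ⊢
        rw [← h2]; exact ha
      refine ⟨a, ?_⟩
      rw [cls_of_mem_support haπ, ← Equiv.Perm.cycle_is_cycleOf ha hκ]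
    · exact ⟨y, cls_fixed hy⟩


lemma sameCycle_eq_of_conj_of_le {π ρ : Equiv.Perm (Fin N)} (hconj : IsConj π ρ)
    (hle : ∀ i j, π.SameCycle i j → ρ.SameCycle i j) :
    ∀ i j, π.SameCycle i j ↔ ρ.SameCycle i j := by
  obtain ⟨g, hg⟩ := isConj_iff.1 hconj
  have hsub : ∀ i, cls π i ⊆ cls ρ i := fun i k hk => mem_cls.2 (hle i k (mem_cls.1 hk))
  have himg : ∀ i, cls ρ (g i) = (cls π i).image g := by
    intro i
    ext k
    rw [mem_cls, ← hg, Equiv.Perm.sameCycle_conj]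
    simp only [Finset.mem_image]
    constructor
    · intro h
      refine ⟨g⁻¹ k, mem_cls.2 ?_, by simp⟩
      simpa using h
    · rintro ⟨x, hx, rfl⟩
      simpa using mem_cls.1 hx
  have hsum : ∑ i, (cls π i).card = ∑ i, (cls ρ i).card := by
    rw [← Equiv.sum_comp g (fun i => (cls ρ i).card)]
    refine Finset.sum_congr rfl fun i _ => ?_
    rw [himg i, Finset.card_image_of_injective _ g.injective]
  have hcard : ∀ i : Fin N, (cls π i).card = (cls ρ i).card := by
    have := (Finset.sum_eq_sum_iff_of_le (s := univ)
      (fun i _ => Finset.card_le_card (hsub i))).1 hsum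
    exact fun i => this i (Finset.mem_univ i)
  have hcls : ∀ i, cls π i = cls ρ i := fun i =>
    Finset.eq_of_subset_of_card_le (hsub i) (le_of_eq (hcard i).symm)
  intro i j
  rw [← mem_cls, ← mem_cls, hcls i]

lemma support_injOn (π : Equiv.Perm (Fin N)) :
    Set.InjOn Equiv.Perm.support (π.cycleFactorsFinset : Set (Equiv.Perm (Fin N))) := by
  intro a ha b hb hab
  by_contra hne
  have hd := Equiv.Perm.cycleFactorsFinset_pairwise_disjoint π ha hb hne
  obtain ⟨x, hx⟩ := (Equiv.Perm.mem_cycleFactorsFinset_iff.1 ha).1.nonempty_support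
  have hx2 : x ∈ b.support := hab ▸ hx
  exact (Finset.disjoint_left.1 (Equiv.Perm.Disjoint.disjoint_support hd) hx) hx2

lemma Ppi_eq_blocks (c : Fin N → Fin q) (π : Equiv.Perm (Fin N)) :
    Ppi c π = ∑ B ∈ Blocks π, Finsupp.single (epsilonCount c B) 1 := by
  have hdisj : Disjoint (π.cycleFactorsFinset.image Equiv.Perm.support)
      ((univ \ π.support).image (fun y => ({y} : Finset (Fin N)))) := by
    rw [Finset.disjoint_left]
    rintro B hB1 hB2
    simp only [Finset.mem_image] at hB1 hB2
    obtain ⟨κ, hκ, rfl⟩ := hB1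
    obtain ⟨y, -, hy⟩ := hB2
    have h2 : 2 ≤ κ.support.card :=
      (Equiv.Perm.mem_cycleFactorsFinset_iff.1 hκ).1.two_le_card_support
    rw [← hy] at h2
    simp at h2
  rw [blocks_eq, Finset.sum_union hdisj,
    Finset.sum_image (fun a ha b hb hab => support_injOn π ha hb hab),
    Finset.sum_image (fun a _ b _ hab => Finset.singleton_injective hab)]
  rfl

lemma Ppi_congr {c : Fin N → Fin q} {π ρ : Equiv.Perm (Fin N)}
    (h : ∀ i j, π.SameCycle i j ↔ ρ.SameCycle i j) : Ppi c π = Ppi c ρ := by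
  have hcls : cls π = cls ρ := funext fun i => Finset.ext fun k => by
    rw [mem_cls, mem_cls, h]
  rw [Ppi_eq_blocks, Ppi_eq_blocks]
  unfold Blocks
  rw [hcls]

lemma Ppi_hset {c : Fin N → Fin q} {h : Equiv.Perm (Equiv.Perm (Fin N))}
    (hh : h ∈ Hset N) (ρ : Equiv.Perm (Fin N)) : Ppi c (h ρ) = Ppi c ρ :=
  (Ppi_congr (sameCycle_eq_of_conj_of_le (hh.1 ρ) (hh.2 ρ))).symm

lemma cls_conj (σ π : Equiv.Perm (Fin N)) (i : Fin N) :
    cls (σ * π * σ⁻¹) (σ i) = (cls π i).image σ := by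
  ext k
  rw [mem_cls, Equiv.Perm.sameCycle_conj]
  simp only [Finset.mem_image]
  constructor
  · intro h
    refine ⟨σ⁻¹ k, mem_cls.2 ?_, by simp⟩
    simpa using h
  · rintro ⟨x, hx, rfl⟩
    simpa using mem_cls.1 hx

lemma blocks_conj (σ π : Equiv.Perm (Fin N)) :
    Blocks (σ * π * σ⁻¹) = (Blocks π).image (Finset.image σ) := by
  ext B
  simp only [Blocks, Finset.mem_image, Finset.mem_univ, true_and]
  constructor
  · rintro ⟨i, rfl⟩
    exact ⟨cls π (σ⁻¹ i), ⟨σ⁻¹ i, rfl⟩, by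
      rw [← cls_conj σ π (σ⁻¹ i)]; simp⟩
  · rintro ⟨B', ⟨i, rfl⟩, rfl⟩
    exact ⟨σ i, cls_conj σ π i⟩

lemma eps_image {c : Fin N → Fin q} {σ : Equiv.Perm (Fin N)} (hσ : ∀ i, c (σ i) = c i)
    (B : Finset (Fin N)) : epsilonCount c (B.image σ) = epsilonCount c B := by
  funext j
  unfold epsilonCount
  rw [Finset.filter_image]
  rw [Finset.card_image_of_injective _ σ.injective]
  congr 1
  apply Finset.filter_congr
  intro x _
  simp [hσ x]

lemma Ppi_conj {c : Fin N → Fin q} {σ : Equiv.Perm (Fin N)} (hσ : ∀ i, c (σ i) = c i)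
    (π : Equiv.Perm (Fin N)) : Ppi c (σ * π * σ⁻¹) = Ppi c π := by
  rw [Ppi_eq_blocks, Ppi_eq_blocks, blocks_conj,
    Finset.sum_image (fun a _ b _ hab => Finset.image_injective σ.injective hab)]
  exact Finset.sum_congr rfl fun B _ => by rw [eps_image hσ]

lemma sum_eps (c : Fin N → Fin q) (B : Finset (Fin N)) :
    ∑ j, epsilonCount c B j = B.card :=
  (Finset.card_eq_sum_card_fiberwise (f := c) (s := B) (t := univ)
    (fun x _ => Finset.mem_univ (c x))).symm

lemma eps_ne_zero {c : Fin N → Fin q} {B : Finset (Fin N)} (hB : B.Nonempty) :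
    epsilonCount c B ≠ 0 := by
  intro h
  have h2 : ∑ j, epsilonCount c B j = 0 := by rw [h]; simp
  rw [sum_eps] at h2
  exact Finset.Nonempty.ne_empty hB (Finset.card_eq_zero.1 h2)

lemma blocks_nonempty {π : Equiv.Perm (Fin N)} {B : Finset (Fin N)} (hB : B ∈ Blocks π) :
    B.Nonempty := by
  obtain ⟨i, -, rfl⟩ := Finset.mem_image.1 hB
  exact ⟨i, self_mem_cls⟩

lemma Ppi_apply_zero (c : Fin N → Fin q) (π : Equiv.Perm (Fin N)) : Ppi c π 0 = 0 := by
  rw [Ppi_eq_blocks, Finsupp.finset_sum_apply]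
  refine Finset.sum_eq_zero fun B hB => ?_
  exact Finsupp.single_eq_of_ne' (eps_ne_zero (blocks_nonempty hB))

lemma colA_single (a : Fin q → ℕ) (j : Fin q) : colA (Finsupp.single a 1) j = a j := by
  show (Finsupp.single a 1).sum (fun b m => m * b j) = a j
  rw [Finsupp.sum_single_index (by simp)]
  ring

lemma colA_add (A B : (Fin q → ℕ) →₀ ℕ) (j : Fin q) :
    colA (A + B) j = colA A j + colA B j := by
  show (A + B).sum (fun b m => m * b j) = A.sum (fun b m => m * b j) + B.sum (fun b m => m * b j)
  exact Finsupp.sum_add_index' (fun a => by simp) (fun a m₁ m₂ => add_mul m₁ m₂ (a j))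

lemma colA_finset_sum {ι : Type*} (S : Finset ι) (g : ι → (Fin q → ℕ)) (j : Fin q) :
    colA (∑ i ∈ S, Finsupp.single (g i) 1) j = ∑ i ∈ S, g i j := by
  classical
  induction S using Finset.induction with
  | empty => simp [colA]
  | insert _ _ hx ih =>
    rw [Finset.sum_insert hx, Finset.sum_insert hx, colA_add, colA_single, ih]

lemma colA_Ppi {n : Fin q → ℕ} (c : Fin N → Fin q)
    (hc : ∀ j, (Finset.univ.filter fun i => c i = j).card = n j) (π : Equiv.Perm (Fin N)) :
    colA (Ppi c π) = n := by
  funext j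
  rw [Ppi_eq_blocks, colA_finset_sum, ← hc j,
    Finset.card_eq_sum_card_fiberwise (f := cls π) (s := univ.filter fun i => c i = j)
      (t := Blocks π) (fun x _ => Finset.mem_image_of_mem _ (Finset.mem_univ x))]
  refine Finset.sum_congr rfl fun B hB => ?_
  obtain ⟨i₀, -, rfl⟩ := Finset.mem_image.1 hB
  show epsilonCount c (cls π i₀) j = _
  unfold epsilonCount
  congr 1
  ext x
  simp only [Finset.mem_filter, Finset.mem_univ, true_and, mem_cls]
  constructor
  · rintro ⟨hx, hcx⟩
    exact ⟨hcx, cls_eq_cls.2 hx.symm⟩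
  · rintro ⟨hcx, hx⟩
    exact ⟨(cls_eq_cls.1 hx).symm, hcx⟩

lemma sum_singleton_multiset {ι α : Type*} (s : Finset ι) (g : ι → α) :
    ∑ i ∈ s, ({ g i } : Multiset α) = s.val.map g := by
  classical
  induction s using Finset.induction with
  | empty => simp
  | @insert a s hx ih =>
    rw [Finset.sum_insert hx, ih, Finset.insert_val_of_notMem hx, Multiset.map_cons]
    rfl

lemma cycleType_eq_T (c : Fin N → Fin q) (ρ : Equiv.Perm (Fin N)) :
    ρ.cycleType = ((Ppi c ρ).toMultiset.map (fun a => ∑ j, a j)).filter (fun m => 2 ≤ m) := by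
  unfold Ppi
  rw [Finsupp.toMultiset_add, Finsupp.toMultiset_sum, Finsupp.toMultiset_sum]
  simp only [Finsupp.toMultiset_single, one_smul]
  rw [sum_singleton_multiset, sum_singleton_multiset, Multiset.map_add, Multiset.filter_add,
    Multiset.map_map, Multiset.map_map]
  have h1 : Multiset.filter (fun m => 2 ≤ m)
      (Multiset.map ((fun a => ∑ j, a j) ∘ fun κ => epsilonCount c κ.support)
        ρ.cycleFactorsFinset.val) = ρ.cycleType := by
    rw [Multiset.filter_eq_self.2, Equiv.Perm.cycleType_def]
    · apply Multiset.map_congr rfl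
      intro κ hκ
      exact sum_eps c κ.support
    · intro m hm
      obtain ⟨κ, hκ, rfl⟩ := Multiset.mem_map.1 hm
      have : κ ∈ ρ.cycleFactorsFinset := hκ
      rw [Function.comp_apply, sum_eps]
      exact (Equiv.Perm.mem_cycleFactorsFinset_iff.1 this).1.two_le_card_support
  have h2 : Multiset.filter (fun m => 2 ≤ m)
      (Multiset.map ((fun a => ∑ j, a j) ∘ fun y => epsilonCount c {y})
        (Finset.univ \ ρ.support).val) = 0 := by
    rw [Multiset.filter_eq_nil.2]
    intro m hm
    obtain ⟨y, hy, rfl⟩ := Multiset.mem_map.1 hm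
    rw [Function.comp_apply, sum_eps]
    simp
  rw [h1, h2, add_zero]

lemma isConj_of_Ppi_eq {c : Fin N → Fin q} {π π' : Equiv.Perm (Fin N)}
    (h : Ppi c π = Ppi c π') : IsConj π π' := by
  rw [Equiv.Perm.isConj_iff_cycleType_eq, cycleType_eq_T c, cycleType_eq_T c, h]

lemma Ppi_apply (c : Fin N → Fin q) (ρ : Equiv.Perm (Fin N)) (a : Fin q → ℕ) :
    Ppi c ρ a = ((Blocks ρ).filter (fun B => epsilonCount c B = a)).card := by
  rw [Ppi_eq_blocks, Finsupp.finset_sum_apply, Finset.card_filter]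
  exact Finset.sum_congr rfl fun B _ => by rw [Finsupp.single_apply]

lemma cls_eq_iff_mem {π : Equiv.Perm (Fin N)} {B : Finset (Fin N)} (hB : B ∈ Blocks π)
    (i : Fin N) : cls π i = B ↔ i ∈ B := by
  obtain ⟨i₀, -, rfl⟩ := Finset.mem_image.1 hB
  rw [mem_cls]
  constructor
  · intro h
    exact (cls_eq_cls.1 h).symm
  · intro h
    exact cls_eq_cls.2 h.symm

lemma cls_mem_blocks (π : Equiv.Perm (Fin N)) (i : Fin N) : cls π i ∈ Blocks π :=
  Finset.mem_image_of_mem _ (Finset.mem_univ i)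

lemma exists_sigma {c : Fin N → Fin q} {π π' : Equiv.Perm (Fin N)}
    (h : Ppi c π = Ppi c π') :
    ∃ σ : Equiv.Perm (Fin N), (∀ i, c (σ i) = c i) ∧
      ∀ i j, π'.SameCycle i j ↔ π.SameCycle (σ i) (σ j) := by
  classical
  -- block-level bijection
  have hfib : ∀ a, ((Blocks π').filter (fun B => epsilonCount c B = a)).card
      = ((Blocks π).filter (fun B => epsilonCount c B = a)).card := by
    intro a
    rw [← Ppi_apply, ← Ppi_apply, h]
  obtain ⟨F, hF, hFval⟩ := glue ⟨id⟩ (Blocks π') (Blocks π)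
    (fun B => epsilonCount c B) (fun B => epsilonCount c B) (fun a => by
      have h1 := hfib a; convert h1 using 2 <;> apply Finset.filter_congr_decidable)
  -- element-level bijection
  have hfib2 : ∀ b : Finset (Fin N) × Fin q,
      ((univ : Finset (Fin N)).filter (fun i => (F (cls π' i), c i) = b)).card
      = ((univ : Finset (Fin N)).filter (fun i => (cls π i, c i) = b)).card := by
    rintro ⟨B, j⟩
    simp only [Prod.mk.injEq]
    by_cases hB : B ∈ Blocks π
    · obtain ⟨B', hB', hFB'⟩ := hF.2.2 hB
      rw [Finset.mem_coe] at hB'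
      have hL : (univ : Finset (Fin N)).filter (fun i => F (cls π' i) = B ∧ c i = j)
          = B'.filter (fun i => c i = j) := by
        ext x
        simp only [Finset.mem_filter, Finset.mem_univ, true_and]
        constructor
        · rintro ⟨h1, h2⟩
          refine ⟨?_, h2⟩
          have := hF.2.1 (Finset.mem_coe.2 (cls_mem_blocks π' x)) (Finset.mem_coe.2 hB')
            (h1.trans hFB'.symm)
          rw [← this]
          exact self_mem_cls
        · rintro ⟨h1, h2⟩
          exact ⟨by rw [(cls_eq_iff_mem hB' x).2 h1, hFB'], h2⟩
      have hR : (univ : Finset (Fin N)).filter (fun i => cls π i = B ∧ c i = j)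
          = B.filter (fun i => c i = j) := by
        ext x
        simp only [Finset.mem_filter, Finset.mem_univ, true_and, cls_eq_iff_mem hB]
      rw [hL, hR]
      have h2 := congrFun (hFval B' hB') j
      rw [hFB'] at h2
      have h3 : epsilonCount c B' j = epsilonCount c B j := h2.symm
      unfold epsilonCount at h3
      convert h3 using 2
    · have hL : (univ : Finset (Fin N)).filter (fun i => F (cls π' i) = B ∧ c i = j) = ∅ := by
        refine Finset.filter_false_of_mem fun x _ => ?_
        rintro ⟨h1, -⟩
        exact hB (h1 ▸ hF.1 (Finset.mem_coe.2 (cls_mem_blocks π' x)))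
      have hR : (univ : Finset (Fin N)).filter (fun i => cls π i = B ∧ c i = j) = ∅ := by
        refine Finset.filter_false_of_mem fun x _ => ?_
        rintro ⟨h1, -⟩
        exact hB (h1 ▸ cls_mem_blocks π x)
      rw [hL, hR]
  obtain ⟨f, hf, hfval⟩ := glue ⟨id⟩ (univ : Finset (Fin N)) (univ : Finset (Fin N))
    (fun i => (F (cls π' i), c i)) (fun i => (cls π i, c i)) (fun b => by
      have h1 := hfib2 b; convert h1 using 2 <;> apply Finset.filter_congr_decidable)
  have hbij : Function.Bijective f := by
    rw [← Set.bijOn_univ]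
    simpa using hf
  have hval : ∀ i, cls π (f i) = F (cls π' i) ∧ c (f i) = c i := by
    intro i
    have := hfval i (Finset.mem_univ i)
    exact ⟨congrArg Prod.fst this, congrArg Prod.snd this⟩
  refine ⟨Equiv.ofBijective f hbij, fun i => (hval i).2, fun i j => ?_⟩
  show π'.SameCycle i j ↔ π.SameCycle (f i) (f j)
  rw [← cls_eq_cls, ← cls_eq_cls, (hval i).1, (hval j).1]
  constructor
  · intro hij
    rw [hij]
  · intro hij
    exact hF.2.1 (Finset.mem_coe.2 (cls_mem_blocks π' i)) (Finset.mem_coe.2 (cls_mem_blocks π' j)) hij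

lemma swap_mem_Hset {ρ π : Equiv.Perm (Fin N)} (hconj : IsConj ρ π)
    (hsc : ∀ i j, ρ.SameCycle i j ↔ π.SameCycle i j) :
    Equiv.swap ρ π ∈ Hset N := by
  constructor
  · intro τ
    rcases eq_or_ne τ ρ with rfl | h1
    · rw [Equiv.swap_apply_left]
      exact hconj
    rcases eq_or_ne τ π with rfl | h2
    · rw [Equiv.swap_apply_right]
      exact hconj.symm
    · rw [Equiv.swap_apply_of_ne_of_ne h1 h2]
  · intro τ i j hij
    rcases eq_or_ne τ ρ with rfl | h1
    · rw [Equiv.swap_apply_left]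
      exact (hsc i j).1 hij
    rcases eq_or_ne τ π with rfl | h2
    · rw [Equiv.swap_apply_right]
      exact (hsc i j).2 hij
    · rwa [Equiv.swap_apply_of_ne_of_ne h1 h2]

lemma one_mem_Hset : (1 : Equiv.Perm (Equiv.Perm (Fin N))) ∈ Hset N :=
  ⟨fun π => by rw [Equiv.Perm.one_apply], fun π i j hij => by simpa using hij⟩

lemma backward {c : Fin N → Fin q} {π π' : Equiv.Perm (Fin N)} (h : Ppi c π = Ppi c π') :
    ∃ h ∈ Hset N, ∃ σ : Equiv.Perm (Fin N),
      (∀ i, c (σ i) = c i) ∧ π = h (σ * π' * σ⁻¹) := by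
  obtain ⟨σ, hσ1, hσ2⟩ := exists_sigma h
  set ρ := σ * π' * σ⁻¹ with hρdef
  have hsc : ∀ x y, ρ.SameCycle x y ↔ π.SameCycle x y := by
    intro x y
    rw [hρdef, Equiv.Perm.sameCycle_conj]
    rw [hσ2 (σ⁻¹ x) (σ⁻¹ y)]
    simp
  have hconj : IsConj ρ π := by
    have h1 : IsConj π' ρ := isConj_iff.2 ⟨σ, rfl⟩
    exact h1.symm.trans (isConj_of_Ppi_eq h).symm
  rcases eq_or_ne ρ π with hρ | hρ
  · exact ⟨1, one_mem_Hset, σ, hσ1, by rw [Equiv.Perm.one_apply]; exact hρ.symm⟩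
  · exact ⟨Equiv.swap ρ π, swap_mem_Hset hconj hsc, σ, hσ1,
      (Equiv.swap_apply_left ρ π).symm⟩

lemma forward {c : Fin N → Fin q} {π π' : Equiv.Perm (Fin N)}
    {h : Equiv.Perm (Equiv.Perm (Fin N))} (hh : h ∈ Hset N) {σ : Equiv.Perm (Fin N)}
    (hσ : ∀ i, c (σ i) = c i) (heq : π = h (σ * π' * σ⁻¹)) : Ppi c π = Ppi c π' := by
  rw [heq, Ppi_hset hh, Ppi_conj hσ]

lemma perm_of_partition (V : Finset (Finset (Fin N)))
    (hdisj : (V : Set (Finset (Fin N))).Pairwise fun B B' => Disjoint B B')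
    (hne : ∀ B ∈ V, B.Nonempty)
    (hcover : ∀ i : Fin N, ∃ B ∈ V, i ∈ B) :
    ∃ π : Equiv.Perm (Fin N), Blocks π = V := by
  classical
  set ψ : Finset (Fin N) → Equiv.Perm (Fin N) := fun B => (B.sort (· ≤ ·)).formPerm with hψ
  set W := V.filter (fun B => 2 ≤ B.card) with hW
  have hWV : W ⊆ V := Finset.filter_subset _ _
  have hψsupp : ∀ B ∈ W, (ψ B).support = B := by
    intro B hB
    have h2 : 2 ≤ B.card := (Finset.mem_filter.1 hB).2
    have hnx : ∀ x : Fin N, B.sort (· ≤ ·) ≠ [x] := by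
      intro x hx
      have := Finset.length_sort (α := Fin N) (r := (· ≤ ·)) (s := B)
      rw [hx] at this
      simp at this
      omega
    rw [hψ]
    simp only
    rw [List.support_formPerm_of_nodup _ (Finset.sort_nodup _ _) hnx, Finset.sort_toFinset]
  have hψcyc : ∀ B ∈ W, (ψ B).IsCycle := by
    intro B hB
    have h2 : 2 ≤ B.card := (Finset.mem_filter.1 hB).2
    exact List.isCycle_formPerm (Finset.sort_nodup _ _) (by rwa [Finset.length_sort])
  have hinj : Set.InjOn ψ ↑W := by
    intro B hB B' hB' hBB'
    rw [← hψsupp B hB, ← hψsupp B' hB', hBB']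
  have hpair : (↑(W.image ψ) : Set (Equiv.Perm (Fin N))).Pairwise Equiv.Perm.Disjoint := by
    intro κ hκ κ' hκ' hne'
    rw [Finset.coe_image] at hκ hκ'
    obtain ⟨B, hB, rfl⟩ := hκ
    obtain ⟨B', hB', rfl⟩ := hκ'
    have hBB' : B ≠ B' := fun h => hne' (by rw [h])
    rw [Equiv.Perm.disjoint_iff_disjoint_support, hψsupp B hB, hψsupp B' hB']
    exact hdisj (hWV (Finset.mem_coe.1 hB)) (hWV (Finset.mem_coe.1 hB')) hBB'
  set π := (W.image ψ).noncommProd id (hpair.mono' fun _ _ => Equiv.Perm.Disjoint.commute)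
    with hπ
  have hfac : π.cycleFactorsFinset = W.image ψ := by
    rw [Equiv.Perm.cycleFactorsFinset_eq_finset]
    refine ⟨?_, hpair, rfl⟩
    intro κ hκ
    obtain ⟨B, hB, rfl⟩ := Finset.mem_image.1 hκ
    exact hψcyc B hB
  have hsupp : ∀ x : Fin N, x ∈ π.support ↔ ∃ B ∈ W, x ∈ B := by
    intro x
    rw [Equiv.Perm.mem_support_iff_mem_support_of_mem_cycleFactorsFinset, hfac]
    constructor
    · rintro ⟨κ, hκ, hx⟩
      obtain ⟨B, hB, rfl⟩ := Finset.mem_image.1 hκ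
      exact ⟨B, hB, by rwa [hψsupp B hB] at hx⟩
    · rintro ⟨B, hB, hx⟩
      exact ⟨ψ B, Finset.mem_image_of_mem _ hB, by rwa [hψsupp B hB]⟩
  refine ⟨π, ?_⟩
  rw [blocks_eq, hfac]
  have h1 : (W.image ψ).image Equiv.Perm.support = W := by
    rw [Finset.image_image]
    have heq : Set.EqOn (Equiv.Perm.support ∘ ψ) id ↑W := fun B hB =>
      hψsupp B (Finset.mem_coe.1 hB)
    rw [Finset.image_congr heq, Finset.image_id]
  have h2 : (univ \ π.support).image (fun y => ({y} : Finset (Fin N))) = V \ W := by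
    ext B
    simp only [Finset.mem_image, Finset.mem_sdiff, Finset.mem_univ, true_and]
    constructor
    · rintro ⟨y, hy, rfl⟩
      rw [hsupp] at hy
      push_neg at hy
      obtain ⟨By, hBy, hyBy⟩ := hcover y
      have hcard : By.card = 1 := by
        have hge : 1 ≤ By.card := Finset.card_pos.2 ⟨y, hyBy⟩
        have hlt : ¬ 2 ≤ By.card := fun h2 => hy By (Finset.mem_filter.2 ⟨hBy, h2⟩) hyBy
        omega
      obtain ⟨z, hz⟩ := Finset.card_eq_one.1 hcard
      have hzy : z = y := by
        rw [hz] at hyBy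
        exact (Finset.mem_singleton.1 hyBy).symm
      rw [hz, hzy] at hBy
      refine ⟨hBy, fun hBW => ?_⟩
      have := (Finset.mem_filter.1 hBW).2
      simp at this
    · rintro ⟨hBV, hBW⟩
      have hcard : B.card = 1 := by
        have hge : 1 ≤ B.card := Finset.card_pos.2 (hne B hBV)
        have hlt : ¬ 2 ≤ B.card := fun h2 => hBW (Finset.mem_filter.2 ⟨hBV, h2⟩)
        omega
      obtain ⟨y, rfl⟩ := Finset.card_eq_one.1 hcard
      refine ⟨y, ?_, rfl⟩
      rw [hsupp]
      rintro ⟨B', hB', hyB'⟩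
      have hBB' : {y} ≠ B' := by
        rintro rfl
        exact hBW hB'
      have := hdisj hBV (hWV hB') hBB'
      exact (Finset.disjoint_left.1 this (Finset.mem_singleton_self y)) hyB'
  rw [h1, h2]
  exact Finset.union_sdiff_of_subset hWV


lemma sigma_filter {ι : Type*} {κ : ι → Type*} (s : Finset ι) (g : ∀ i, Finset (κ i))
    (p : (Σ i, κ i) → Prop) [DecidablePred p] :
    (s.sigma g).filter p = s.sigma (fun i => (g i).filter (fun y => p ⟨i, y⟩)) := by
  ext ⟨i, y⟩
  simp only [Finset.mem_filter, Finset.mem_sigma]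
  tauto

noncomputable def innerT (a : Fin q → ℕ) : Finset (Σ _j : Fin q, ℕ) :=
  univ.sigma (fun j => range (a j))

noncomputable def tA (A : (Fin q → ℕ) →₀ ℕ) :
    Finset (Σ _a : Fin q → ℕ, Σ _m : ℕ, Σ _j : Fin q, ℕ) :=
  A.support.sigma (fun a => (range (A a)).sigma (fun _ => innerT a))

lemma innerT_filter_card (a : Fin q → ℕ) (j : Fin q) :
    ((innerT a).filter (fun y => y.1 = j)).card = a j := by
  unfold innerT
  rw [sigma_filter, Finset.card_sigma]
  have h : ∀ j' : Fin q, ((range (a j')).filter (fun _ => j' = j)).card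
      = if j' = j then a j' else 0 := by
    intro j'
    by_cases hj : j' = j
    · simp [hj, Finset.filter_true_of_mem]
    · simp [hj]
  rw [Finset.sum_congr rfl fun j' _ => h j']
  simp

lemma innerT_card (a : Fin q → ℕ) : (innerT a).card = ∑ j, a j := by
  unfold innerT
  rw [Finset.card_sigma]
  simp

lemma tA_color_card (A : (Fin q → ℕ) →₀ ℕ) (j : Fin q) :
    ((tA A).filter (fun x => x.2.2.1 = j)).card = colA A j := by
  unfold tA
  rw [sigma_filter, Finset.card_sigma]
  unfold colA
  refine Finset.sum_congr rfl fun a _ => ?_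
  rw [sigma_filter, Finset.card_sigma]
  rw [Finset.sum_congr rfl fun m _ => innerT_filter_card a j]
  simp [mul_comm]

lemma tA_blk_card (A : (Fin q → ℕ) →₀ ℕ) {a₀ : Fin q → ℕ} {m₀ : ℕ}
    (ha₀ : a₀ ∈ A.support) (hm₀ : m₀ ∈ range (A a₀)) (j : Fin q) :
    ((tA A).filter (fun x => x.1 = a₀ ∧ x.2.1 = m₀ ∧ x.2.2.1 = j)).card = a₀ j := by
  rw [← innerT_filter_card a₀ j]
  apply Finset.card_bij' (fun x _ => x.2.2) (fun y _ => (⟨a₀, m₀, y⟩ : Σ _a : Fin q → ℕ, Σ _m : ℕ, Σ _j : Fin q, ℕ))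
  · rintro ⟨a, m, y⟩ hx
    simp only [Finset.mem_filter, tA, Finset.mem_sigma] at hx ⊢
    obtain ⟨⟨ha, hm, hy⟩, rfl, rfl, hj⟩ := hx
    exact ⟨hy, hj⟩
  · rintro y hy
    simp only [Finset.mem_filter] at hy
    simp [tA, ha₀, hm₀, hy.1, hy.2]
  · rintro ⟨a, m, y⟩ hx
    simp only [Finset.mem_filter, tA, Finset.mem_sigma] at hx
    obtain ⟨-, rfl, rfl, -⟩ := hx
    rfl
  · rintro y hy
    rfl
lemma surj {n : Fin q → ℕ} (c : Fin N → Fin q)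
    (hc : ∀ j, (Finset.univ.filter fun i => c i = j).card = n j)
    (A : (Fin q → ℕ) →₀ ℕ) (hA0 : A 0 = 0) (hAcol : colA A = n) :
    ∃ π : Equiv.Perm (Fin N), Ppi c π = A := by
  classical
  -- elements of the support are nonzero vectors
  have hane : ∀ a ∈ A.support, ∃ j, 0 < a j := by
    intro a ha
    by_contra hno
    push_neg at hno
    have ha0 : a = 0 := funext fun j => Nat.le_zero.1 (hno j)
    rw [ha0] at ha
    exact Finsupp.mem_support_iff.1 ha hA0
  -- a junk function
  have hj : Nonempty (Fin N → (Σ _a : Fin q → ℕ, Σ _m : ℕ, Σ _j : Fin q, ℕ)) := by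
    rcases Nat.eq_zero_or_pos N with hN | hN
    · exact ⟨fun i => absurd i.2 (by omega)⟩
    · exact ⟨fun _ => ⟨0, 0, c ⟨0, hN⟩, 0⟩⟩
  -- the color fibers match
  have hfib : ∀ b : Fin q, ((univ : Finset (Fin N)).filter fun i => c i = b).card
      = ((tA A).filter fun x => x.2.2.1 = b).card := by
    intro b
    rw [hc b, tA_color_card, hAcol]
  obtain ⟨f, hf, hfv⟩ := glue hj (univ : Finset (Fin N)) (tA A)
    (fun i => c i) (fun x => x.2.2.1) (fun b => by
      have h1 := hfib b; convert h1 using 2 <;> apply Finset.filter_congr_decidable)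
  have hft : ∀ i, f i ∈ tA A := fun i => Finset.mem_coe.1 (hf.1 (Finset.mem_coe.2 (Finset.mem_univ i)))
  have hfinj : ∀ i i', f i = f i' → i = i' := fun i i' h =>
    hf.2.1 (Finset.mem_coe.2 (Finset.mem_univ i)) (Finset.mem_coe.2 (Finset.mem_univ i')) h
  have hfsurj : ∀ x ∈ tA A, ∃ i, f i = x := by
    intro x hx
    obtain ⟨i, -, hi⟩ := hf.2.2 (Finset.mem_coe.2 hx)
    exact ⟨i, hi⟩
  have hcol : ∀ i, c i = (f i).2.2.1 := fun i => (hfv i (Finset.mem_univ i)).symm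
  -- the blocks
  set pset : Finset (Σ _a : Fin q → ℕ, ℕ) := A.support.sigma (fun a => range (A a)) with hpset
  set Dp : (Σ _a : Fin q → ℕ, ℕ) → Finset (Fin N) :=
    fun p => univ.filter (fun i => (f i).1 = p.1 ∧ (f i).2.1 = p.2) with hDp
  have hmemtA : ∀ i, (f i).1 ∈ A.support ∧ (f i).2.1 ∈ range (A (f i).1) := by
    intro i
    have := hft i
    unfold tA at this
    rw [Finset.mem_sigma, Finset.mem_sigma] at this
    exact ⟨this.1, this.2.1⟩
  have hcover : ∀ i : Fin N, i ∈ Dp ⟨(f i).1, (f i).2.1⟩ := by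
    intro i
    rw [hDp]
    exact Finset.mem_filter.2 ⟨Finset.mem_univ i, rfl, rfl⟩
  have hDpdisj : ∀ p p' : (Σ _a : Fin q → ℕ, ℕ), p ≠ p' → Disjoint (Dp p) (Dp p') := by
    intro p p' hpp'
    rw [Finset.disjoint_left]
    intro i hi hi'
    rw [hDp, Finset.mem_filter] at hi hi'
    apply hpp'
    obtain ⟨-, h1, h2⟩ := hi
    obtain ⟨-, h1', h2'⟩ := hi'
    cases p; cases p'
    simp only at h1 h2 h1' h2'
    subst h1; subst h2; rw [← h1', ← h2']
  have hDpcount : ∀ p ∈ pset, ∀ j, ((Dp p).filter (fun i => c i = j)).card = p.1 j := by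
    rintro ⟨a₀, m₀⟩ hp j
    rw [hpset, Finset.mem_sigma] at hp
    have := tA_blk_card A hp.1 hp.2 j
    rw [← this]
    apply Finset.card_bij (fun i _ => f i)
    · intro i hi
      rw [Finset.mem_filter] at hi ⊢
      obtain ⟨hi1, hi2⟩ := hi
      rw [hDp, Finset.mem_filter] at hi1
      exact ⟨hft i, hi1.2.1, hi1.2.2, by rw [← hcol i]; exact hi2⟩
    · intro i hi i' hi' h
      exact hfinj i i' h
    · intro x hx
      rw [Finset.mem_filter] at hx
      obtain ⟨i, rfl⟩ := hfsurj x hx.1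
      refine ⟨i, Finset.mem_filter.2 ⟨?_, ?_⟩, rfl⟩
      · rw [hDp]
        exact Finset.mem_filter.2 ⟨Finset.mem_univ i, hx.2.1, hx.2.2.1⟩
      · rw [hcol i]
        exact hx.2.2.2
  have hDpeps : ∀ p ∈ pset, epsilonCount c (Dp p) = p.1 := by
    intro p hp
    funext j
    have := hDpcount p hp j
    unfold epsilonCount
    convert this using 2
  have hDpne : ∀ p ∈ pset, (Dp p).Nonempty := by
    rintro ⟨a₀, m₀⟩ hp
    rw [hpset, Finset.mem_sigma] at hp
    obtain ⟨j, hjpos⟩ := hane a₀ hp.1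
    have hx : (⟨a₀, m₀, j, 0⟩ : Σ _a : Fin q → ℕ, Σ _m : ℕ, Σ _j : Fin q, ℕ) ∈ tA A := by
      unfold tA innerT
      rw [Finset.mem_sigma, Finset.mem_sigma, Finset.mem_sigma]
      exact ⟨hp.1, hp.2, Finset.mem_univ j, Finset.mem_range.2 hjpos⟩
    obtain ⟨i, hi⟩ := hfsurj _ hx
    refine ⟨i, ?_⟩
    rw [hDp, Finset.mem_filter, hi]
    exact ⟨Finset.mem_univ i, rfl, rfl⟩
  have hDpinj : Set.InjOn Dp ↑pset := by
    intro p hp p' hp' h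
    by_contra hne'
    obtain ⟨i, hi⟩ := hDpne p (Finset.mem_coe.1 hp)
    exact Finset.disjoint_left.1 (hDpdisj p p' hne') hi (h ▸ hi)
  -- the partition
  set V := pset.image Dp with hV
  have hVpart : (↑V : Set (Finset (Fin N))).Pairwise fun B B' => Disjoint B B' := by
    intro B hB B' hB' hBB'
    rw [hV, Finset.coe_image] at hB hB'
    obtain ⟨p, hp, rfl⟩ := hB
    obtain ⟨p', hp', rfl⟩ := hB'
    exact hDpdisj p p' (fun h => hBB' (by rw [h]))
  have hVne : ∀ B ∈ V, B.Nonempty := by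
    intro B hB
    obtain ⟨p, hp, rfl⟩ := Finset.mem_image.1 hB
    exact hDpne p hp
  have hVcover : ∀ i : Fin N, ∃ B ∈ V, i ∈ B := by
    intro i
    refine ⟨Dp ⟨(f i).1, (f i).2.1⟩, ?_, hcover i⟩
    rw [hV]
    apply Finset.mem_image_of_mem
    rw [hpset, Finset.mem_sigma]
    exact ⟨(hmemtA i).1, (hmemtA i).2⟩
  obtain ⟨π, hπ⟩ := perm_of_partition V hVpart hVne hVcover
  refine ⟨π, ?_⟩
  rw [Ppi_eq_blocks, hπ, hV,
    Finset.sum_image (fun p hp p' hp' h => hDpinj (Finset.mem_coe.2 hp) (Finset.mem_coe.2 hp') h)]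
  have hsum : ∑ p ∈ pset, Finsupp.single (epsilonCount c (Dp p)) 1
      = ∑ p ∈ pset, Finsupp.single p.1 (1 : ℕ) :=
    Finset.sum_congr rfl fun p hp => by rw [hDpeps p hp]
  rw [hsum, hpset, Finset.sum_sigma]
  have : ∀ a ∈ A.support, ∑ _m ∈ range (A a), Finsupp.single a (1:ℕ) = Finsupp.single a (A a) := by
    intro a ha
    rw [Finset.sum_const, Finset.card_range, Finsupp.smul_single]
    simp
  rw [Finset.sum_congr rfl this]
  exact Finsupp.sum_single A

end PpiProof

/-- **The fibers of `Π` are exactly the orbits of `G_𝐧 = H_{|𝐧|} ⋊ S_𝐧` acting by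
`(h,σ).π = h(σπσ⁻¹)`; hence `Π` induces a bijection between the orbit space
`S_{|𝐧|}/G_𝐧` and the set `𝒜_𝐧` of `q`-colored partitions of `𝐧`.** -/
theorem Ppi_fibers_are_orbits (q : ℕ) (n : Fin q → ℕ) (c : Fin (∑ j, n j) → Fin q)
    (hc : ∀ j, (Finset.univ.filter fun i => c i = j).card = n j) :
    (∀ π π' : Equiv.Perm (Fin (∑ j, n j)),
      Ppi c π = Ppi c π' ↔
        ∃ h ∈ Hset (∑ j, n j), ∃ σ : Equiv.Perm (Fin (∑ j, n j)),
          (∀ i, c (σ i) = c i) ∧ π = h (σ * π' * σ⁻¹)) ∧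
    (∀ π : Equiv.Perm (Fin (∑ j, n j)), Ppi c π ∈ CPartSet n) ∧
    (∀ A ∈ CPartSet n, ∃ π : Equiv.Perm (Fin (∑ j, n j)), Ppi c π = A) := by
  constructor
  · intro π π'
    constructor
    · exact PpiProof.backward
    · rintro ⟨h, hh, σ, hσ, heq⟩
      exact PpiProof.forward hh hσ heq
  constructor
  · intro π
    exact ⟨PpiProof.Ppi_apply_zero c π, PpiProof.colA_Ppi c hc π⟩
  · rintro A ⟨hA0, hAcol⟩
    exact PpiProof.surj c hc A hA0 hAcol
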